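/- Let α > 0 and let S ⊆ ℍ be a topological surface with the α-flat cone property. Then π(S) is an open subset of ℝ² and there exists a continuous function φ : π(S) → ℝ such that S = Γ_φ; that is, S is the intrinsic graph of a continuous function defined on an open subset of ℝ². -/

import Mathlib

open Set

noncomputable section

/-- The first Heisenberg group as ℝ³. -/
abbrev H : Type := ℝ × ℝ × ℝ

/-- Heisenberg group multiplication. -/
def Hmul (p q : H) : H :=
  (p.1 + q.1, p.2.1 + q.2.1, p.2.2 + q.2.2 + (p.1 * q.2.1 - q.1 * p.2.1) / 2)

/-- Heisenberg group inverse. -/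
def Hinv (p : H) : H := (-p.1, -p.2.1, -p.2.2)

/-- Left translation of a set: `pE = {pe : e ∈ E}`. -/
def LTrans (p : H) (E : Set H) : Set H := Hmul p '' E

/-- The α-flat cone `fC(α) = {(x,y,0) : |y| < α|x|}`. -/
def fC (α : ℝ) : Set H := {p | |p.2.1| < α * |p.1| ∧ p.2.2 = 0}

/-- The α-full cone `C(α) = {(x,y,z) : |y| < α|x|, |z| < αx²/2}`. -/
def fullC (α : ℝ) : Set H := {p | |p.2.1| < α * |p.1| ∧ |p.2.2| < α * p.1 ^ 2 / 2}

/-- The truncated full cone `C(β,r)`. -/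
def truncC (β r : ℝ) : Set H :=
  {p | |p.2.1| < β * |p.1| ∧ |p.2.2| < β * p.1 ^ 2 / 2 ∧ |p.1| < r}

/-- The vertical set `vC(β,r) = {(x,0,ux²/2) : |u| < β, |x| < r}`. -/
def vC (β r : ℝ) : Set H :=
  {p | ∃ u x : ℝ, |u| < β ∧ |x| < r ∧ p = (x, 0, u * x ^ 2 / 2)}

/-- The shear map `M_t(x,y,z) = (x, y + tx, z)`. -/
def Mmap (t : ℝ) (p : H) : H := (p.1, p.2.1 + t * p.1, p.2.2)

/-- The projection `π(x,y,z) = (y, z + xy/2)`. -/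
def proj (p : H) : ℝ × ℝ := (p.2.1, p.2.2 + p.1 * p.2.1 / 2)

/-- The intrinsic graph of `φ` over `Ω`. -/
def IGraph (Ω : Set (ℝ × ℝ)) (φ : ℝ × ℝ → ℝ) : Set H :=
  (fun w => (φ w, w.1, w.2 - w.1 * φ w / 2)) '' Ω

/-- The α-flat cone property. -/
def FlatConeProp (α : ℝ) (S : Set H) : Prop :=
  ∀ p ∈ S, fC α ∩ LTrans (Hinv p) S = ∅

/-- A topological surface: every point of `S` has an open neighborhood in `S`
homeomorphic to `ℝ²`. -/
def IsTopSurface (S : Set H) : Prop :=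
  ∀ p : S, ∃ U : Set S, IsOpen U ∧ p ∈ U ∧ Nonempty (U ≃ₜ (ℝ × ℝ))

/-- Dilations `δ_λ(x,y,z) = (λx, λy, λ²z)`. -/
def dil (l : ℝ) (p : H) : H := (l * p.1, l * p.2.1, l ^ 2 * p.2.2)

/-- A cone is a set invariant under all dilations. -/
def IsCone (E : Set H) : Prop := ∀ l : ℝ, 0 < l → dil l '' E = E

/-- Rotation around the z-axis by angle θ. -/
def Rot (θ : ℝ) (p : H) : H :=
  (p.1 * Real.cos θ - p.2.1 * Real.sin θ, p.1 * Real.sin θ + p.2.1 * Real.cos θ, p.2.2)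


namespace Wind

open Complex Topology

/-- A lift of `γ` along `exp` on `[0,1]`. -/
def IsLift (γ L : ℝ → ℂ) : Prop :=
  ContinuousOn L (Icc 0 1) ∧ ∀ t ∈ Icc (0:ℝ) 1, Complex.exp (L t) = γ t

/-- clamp to [0,1] -/
def clamp (t : ℝ) : ℝ := max 0 (min 1 t)

lemma clamp_mem (t : ℝ) : clamp t ∈ Icc (0:ℝ) 1 :=
  ⟨le_max_left _ _, max_le zero_le_one (min_le_left _ _)⟩

lemma clamp_of_mem {t : ℝ} (ht : t ∈ Icc (0:ℝ) 1) : clamp t = t := by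
  rw [clamp, min_eq_right ht.2, max_eq_right ht.1]

lemma continuous_clamp : Continuous clamp :=
  continuous_const.max (continuous_const.min continuous_id)

lemma clamp_lip (s t : ℝ) : |clamp s - clamp t| ≤ |s - t| := by
  have h1 : |clamp s - clamp t| ≤ max |(0:ℝ) - 0| |min 1 s - min 1 t| :=
    abs_max_sub_max_le_max _ _ _ _
  have h2 : |min (1:ℝ) s - min 1 t| ≤ max |(1:ℝ) - 1| |s - t| :=
    abs_min_sub_min_le_max _ _ _ _
  rw [sub_self, abs_zero, max_eq_right (abs_nonneg _)] at h1 h2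
  exact h1.trans h2

lemma mem_slitPlane_of_close {z : ℂ} (h : ‖z - 1‖ < 1) : z ∈ Complex.slitPlane := by
  have : z = 1 + (z - 1) := by ring
  rw [this]
  exact Complex.mem_slitPlane_of_norm_lt_one (by simpa using h)

lemma log_exp_ratio {a b : ℂ} (ha : a ≠ 0) (h : ‖b - a‖ < ‖a‖) :
    Complex.exp (Complex.log (b / a)) = b / a := by
  apply Complex.exp_log
  have hb : b ≠ 0 := by
    rintro rfl
    rw [zero_sub, norm_neg] at h
    exact lt_irrefl _ h
  exact div_ne_zero hb ha

theorem exists_lift {γ : ℝ → ℂ} (hγ : ContinuousOn γ (Icc 0 1))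
    (h0 : ∀ t ∈ Icc (0:ℝ) 1, γ t ≠ 0) : ∃ L, IsLift γ L := by
  classical
  set γ' : ℝ → ℂ := fun t => γ (clamp t) with hγ'def
  have hγ'cont : Continuous γ' := hγ.comp_continuous continuous_clamp clamp_mem
  have hγ'ne : ∀ t, γ' t ≠ 0 := fun t => h0 _ (clamp_mem t)
  have hEq : ∀ t ∈ Icc (0:ℝ) 1, γ' t = γ t := fun t ht => by
    simp only [hγ'def, clamp_of_mem ht]
  obtain ⟨t₀, ht₀, hmin⟩ := isCompact_Icc.exists_isMinOn
    (⟨0, by norm_num⟩ : (Icc (0:ℝ) 1).Nonempty) (hγ'cont.norm.continuousOn)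
  set m : ℝ := ‖γ' t₀‖ with hm
  have hmpos : 0 < m := by
    rw [hm]; exact norm_pos_iff.mpr (hγ'ne t₀)
  have hmle : ∀ t, m ≤ ‖γ' t‖ := by
    intro t
    have h1 : γ' t = γ' (clamp t) := by
      simp only [hγ'def]
      congr 1
      exact (clamp_of_mem (clamp_mem t)).symm
    rw [h1]
    exact hmin (clamp_mem t)
  have huc : UniformContinuous γ' := by
    have h1 : UniformContinuousOn γ (Icc 0 1) :=
      isCompact_Icc.uniformContinuousOn_of_continuous hγ
    rw [Metric.uniformContinuous_iff]
    intro ε hε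
    rw [Metric.uniformContinuousOn_iff] at h1
    obtain ⟨δ, hδ, hδ'⟩ := h1 ε hε
    refine ⟨δ, hδ, fun {s t} hst => ?_⟩
    apply hδ' _ (clamp_mem _) _ (clamp_mem _)
    calc dist (clamp s) (clamp t) = |clamp s - clamp t| := Real.dist_eq _ _
    _ ≤ |s - t| := clamp_lip s t
    _ = dist s t := (Real.dist_eq _ _).symm
    _ < δ := hst
  rw [Metric.uniformContinuous_iff] at huc
  obtain ⟨δ, hδpos, hδ⟩ := huc m hmpos
  obtain ⟨n, hn⟩ := exists_nat_one_div_lt hδpos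
  have hosc : ∀ s t : ℝ, |s - t| ≤ 1 / (n + 1) → ‖γ' s - γ' t‖ < m := by
    intro s t hst
    have h2 : dist s t < δ := by
      rw [Real.dist_eq]
      exact hst.trans_lt hn
    have := hδ h2
    rwa [dist_eq_norm] at this
  have key : ∀ k : ℕ, ∃ L : ℝ → ℂ, Continuous L ∧
      ∀ t ∈ Icc (0:ℝ) (k / (n+1)), Complex.exp (L t) = γ' t := by
    intro k
    induction k with
    | zero =>
      refine ⟨fun _ => Complex.log (γ' 0), continuous_const, ?_⟩
      intro t ht
      simp only [Nat.cast_zero, zero_div] at ht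
      have : t = 0 := le_antisymm ht.2 ht.1
      rw [this, Complex.exp_log (hγ'ne 0)]
    | succ k ih =>
      obtain ⟨L, hL, hLe⟩ := ih
      set a : ℝ := k / (n+1) with ha
      set b : ℝ := (k+1 : ℕ) / (n+1) with hb
      have hab : a ≤ b := by
        rw [ha, hb]
        gcongr
        exact_mod_cast Nat.le_succ k
      have hba : b - a = 1 / (n+1) := by
        rw [ha, hb]
        push_cast
        ring
      set c2 : ℝ → ℝ := fun t => max a (min b t) with hc2
      have hc2cont : Continuous c2 := continuous_const.max (continuous_const.min continuous_id)
      have hc2mem : ∀ t, a ≤ c2 t ∧ c2 t ≤ b := fun t =>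
        ⟨le_max_left _ _, max_le hab (min_le_left _ _)⟩
      have hc2close : ∀ t, ‖γ' (c2 t) - γ' a‖ < m := by
        intro t
        apply hosc
        rw [_root_.abs_of_nonneg (by linarith [(hc2mem t).1])]
        linarith [(hc2mem t).2, hba]
      have hratio : ∀ t, ‖γ' (c2 t) / γ' a - 1‖ < 1 := by
        intro t
        rw [div_sub_one (hγ'ne a)]
        rw [norm_div, div_lt_one (norm_pos_iff.mpr (hγ'ne a))]
        exact (hc2close t).trans_le (hmle a)
      set g : ℝ → ℂ := fun t => L a + Complex.log (γ' (c2 t) / γ' a) with hg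
      have hgcont : Continuous g := by
        rw [hg]
        apply continuous_const.add
        rw [continuous_iff_continuousAt]
        intro t
        exact ContinuousAt.clog ((hγ'cont.comp hc2cont).div_const _).continuousAt
          (mem_slitPlane_of_close (hratio t))
      have hmatch : g a = L a := by
        rw [hg]
        dsimp only
        have h3 : c2 a = a := by
          rw [hc2]
          dsimp only
          rw [min_eq_right hab, max_self]
        rw [h3, div_self (hγ'ne a), Complex.log_one, add_zero]
      refine ⟨fun t => if t ≤ a then L t else g t, ?_, ?_⟩
      · exact Continuous.if_le hL hgcont continuous_id continuous_const
          (fun t ht => by rw [ht, hmatch])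
      · intro t ht
        dsimp only
        by_cases htle : t ≤ a
        · rw [if_pos htle]
          exact hLe t ⟨ht.1, htle⟩
        · rw [if_neg htle]
          push_neg at htle
          have hc2t : c2 t = t := by
            rw [hc2]
            dsimp only
            rw [min_eq_right ht.2, max_eq_right htle.le]
          rw [hg]
          dsimp only
          rw [Complex.exp_add, hLe a ⟨by positivity, le_refl a⟩, hc2t]
          rw [log_exp_ratio (hγ'ne a) (by rw [← hc2t]; exact (hc2close t).trans_le (hmle a))]
          exact mul_div_cancel₀ _ (hγ'ne a)
  obtain ⟨L, hL, hLe⟩ := key (n+1)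
  refine ⟨L, hL.continuousOn, fun t ht => ?_⟩
  rw [hLe t ?_, hEq t ht]
  have h4 : ((n+1 : ℕ) : ℝ) / (n+1) = 1 := by
    push_cast
    field_simp
  rw [h4]
  exact ht

/-- An interval-valued continuous function taking values in `c + dℤ` is constant. -/
lemma int_values_const {u : ℝ → ℝ} {a b c d : ℝ} (hab : a ≤ b)
    (hu : ContinuousOn u (Icc a b)) (hd : 0 < d)
    (hint : ∀ t ∈ Icc a b, ∃ k : ℤ, u t = c + k * d) : u a = u b := by
  obtain ⟨k₀, hk₀⟩ := hint a (left_mem_Icc.mpr hab)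
  obtain ⟨k₁, hk₁⟩ := hint b (right_mem_Icc.mpr hab)
  have hkk : k₀ = k₁ := by
    by_contra hne
    -- v strictly between
    set K : ℤ := min k₀ k₁ with hK
    set v : ℝ := c + (K : ℤ) * d + d / 2 with hv
    have hmem : v ∈ uIcc (u a) (u b) := by
      rcases le_or_gt k₀ k₁ with h | h
      · have hlt : k₀ < k₁ := lt_of_le_of_ne h hne
        have h1 : u a ≤ v := by
          rw [hk₀, hv, hK, min_eq_left h]
          linarith
        have h2 : v ≤ u b := by
          rw [hk₁, hv, hK, min_eq_left h]
          have : ((k₀:ℝ) + 1) ≤ (k₁:ℝ) := by exact_mod_cast hlt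
          nlinarith
        exact mem_uIcc.mpr (Or.inl ⟨h1, h2⟩)
      · have h1 : u b ≤ v := by
          rw [hk₁, hv, hK, min_eq_right h.le]
          linarith
        have h2 : v ≤ u a := by
          rw [hk₀, hv, hK, min_eq_right h.le]
          have : ((k₁:ℝ) + 1) ≤ (k₀:ℝ) := by exact_mod_cast h
          nlinarith
        exact mem_uIcc.mpr (Or.inr ⟨h1, h2⟩)
    have hIcc : uIcc a b = Icc a b := uIcc_of_le hab
    have := intermediate_value_uIcc (by rwa [hIcc]) hmem
    obtain ⟨t, ht, hut⟩ := this
    rw [hIcc] at ht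
    obtain ⟨k, hk⟩ := hint t ht
    rw [hk, hv] at hut
    have h5 : (k:ℝ) * d - (K : ℤ) * d = d / 2 := by linarith
    have h7 : ((2 * (k - K) : ℤ) : ℝ) * d = 1 * d := by push_cast; linarith
    have h8 : ((2 * (k - K) : ℤ) : ℝ) = 1 := mul_right_cancel₀ hd.ne' h7
    have h9 : (2 * (k - K) : ℤ) = 1 := by exact_mod_cast h8
    omega
  rw [hk₀, hk₁, hkk]

lemma lift_diff {γ L M : ℝ → ℂ} (hL : IsLift γ L) (hM : IsLift γ M) :
    L 1 - L 0 = M 1 - M 0 := by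
  set D : ℝ → ℂ := fun t => L t - M t with hD
  have hexp : ∀ t ∈ Icc (0:ℝ) 1, Complex.exp (D t) = 1 := by
    intro t ht
    rw [hD]
    dsimp only
    rw [Complex.exp_sub, hL.2 t ht, hM.2 t ht, div_self]
    rw [← hM.2 t ht]
    exact Complex.exp_ne_zero _
  have hrep : ∀ t ∈ Icc (0:ℝ) 1, ∃ k : ℤ, D t = k * (2 * Real.pi * I) := by
    intro t ht
    exact Complex.exp_eq_one_iff.mp (hexp t ht)
  have him : ∀ t ∈ Icc (0:ℝ) 1, ∃ k : ℤ, (D t).im = 0 + k * (2 * Real.pi) := by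
    intro t ht
    obtain ⟨k, hk⟩ := hrep t ht
    refine ⟨k, ?_⟩
    rw [hk]
    simp
  have hucont : ContinuousOn (fun t => (D t).im) (Icc 0 1) :=
    Complex.continuous_im.comp_continuousOn (hL.1.sub hM.1)
  have h01 := int_values_const zero_le_one hucont (by positivity) him
  -- D 0 = D 1 as complex numbers
  obtain ⟨k₀, hk₀⟩ := hrep 0 (by norm_num)
  obtain ⟨k₁, hk₁⟩ := hrep 1 (by norm_num)
  have hre : (D 0).re = (D 1).re := by
    rw [hk₀, hk₁]; simp
  have him' : (D 0).im = (D 1).im := h01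
  have hD01 : D 0 = D 1 := Complex.ext hre him'
  rw [hD] at hD01
  dsimp only at hD01
  linear_combination -hD01

open scoped Classical in
def wnd (γ : ℝ → ℂ) : ℂ :=
  if h : ∃ L, IsLift γ L then h.choose 1 - h.choose 0 else 0

lemma wnd_eq {γ L : ℝ → ℂ} (hL : IsLift γ L) : wnd γ = L 1 - L 0 := by
  rw [wnd]
  rw [dif_pos ⟨L, hL⟩]
  exact lift_diff (Exists.choose_spec (⟨L, hL⟩ : ∃ L, IsLift γ L)) hL

lemma wnd_const {γ : ℝ → ℂ} {c : ℂ} (hc : c ≠ 0)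
    (h : ∀ t ∈ Icc (0:ℝ) 1, γ t = c) : wnd γ = 0 := by
  have : IsLift γ (fun _ => Complex.log c) :=
    ⟨continuousOn_const, fun t ht => by rw [Complex.exp_log hc, h t ht]⟩
  rw [wnd_eq this, sub_self]

lemma mem_slitPlane_of_close' {z : ℂ} (h : ‖z - 1‖ < 1) : z ∈ Complex.slitPlane := by
  have h2 : z = 1 + (z - 1) := by ring
  rw [h2]
  exact Complex.mem_slitPlane_of_norm_lt_one (by simpa using h)

/-- Loops that are uniformly closer to `δ` than `‖δ‖` have the same winding number. -/
lemma wnd_close {γ δ : ℝ → ℂ} {M : ℝ → ℂ} (hM : IsLift δ M)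
    (hγ : ContinuousOn γ (Icc 0 1))
    (hclose : ∀ t ∈ Icc (0:ℝ) 1, ‖γ t - δ t‖ < ‖δ t‖)
    (hγloop : γ 1 = γ 0) (hδloop : δ 1 = δ 0) : wnd γ = wnd δ := by
  have hδne : ∀ t ∈ Icc (0:ℝ) 1, δ t ≠ 0 := by
    intro t ht
    intro h0
    have := hclose t ht
    rw [h0] at this
    simp only [sub_zero, norm_zero] at this
    exact (norm_nonneg _).not_gt this
  have hγne : ∀ t ∈ Icc (0:ℝ) 1, γ t ≠ 0 := by
    intro t ht h0
    have := hclose t ht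
    rw [h0, zero_sub, norm_neg] at this
    exact lt_irrefl _ this
  have hδcont : ContinuousOn δ (Icc 0 1) :=
    (Complex.continuous_exp.comp_continuousOn hM.1).congr
      (fun t ht => (hM.2 t ht).symm)
  set q : ℝ → ℂ := fun t => γ t / δ t with hq
  have hqcont : ContinuousOn q (Icc 0 1) := hγ.div hδcont hδne
  have hqclose : ∀ t ∈ Icc (0:ℝ) 1, ‖q t - 1‖ < 1 := by
    intro t ht
    rw [hq]
    dsimp only
    rw [div_sub_one (hδne t ht), norm_div, div_lt_one (norm_pos_iff.mpr (hδne t ht))]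
    exact hclose t ht
  have hqne : ∀ t ∈ Icc (0:ℝ) 1, q t ≠ 0 :=
    fun t ht => div_ne_zero (hγne t ht) (hδne t ht)
  have hlift : IsLift γ (fun t => M t + Complex.log (q t)) := by
    constructor
    · exact hM.1.add (hqcont.clog (fun t ht => mem_slitPlane_of_close' (hqclose t ht)))
    · intro t ht
      rw [Complex.exp_add, hM.2 t ht, Complex.exp_log (hqne t ht), hq]
      dsimp only
      rw [mul_div_cancel₀ _ (hδne t ht)]
  rw [wnd_eq hlift, wnd_eq hM]
  have hq10 : q 1 = q 0 := by rw [hq]; dsimp only; rw [hγloop, hδloop]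
  rw [hq10]
  ring

/-- Winding number is invariant inside a homotopy of loops avoiding 0. -/
lemma wnd_homotopy {H : ℝ → ℝ → ℂ}
    (hH : ContinuousOn (fun p : ℝ × ℝ => H p.1 p.2) (Icc 0 1 ×ˢ Icc 0 1))
    (hne : ∀ s ∈ Icc (0:ℝ) 1, ∀ t ∈ Icc (0:ℝ) 1, H s t ≠ 0)
    (hloop : ∀ s ∈ Icc (0:ℝ) 1, H s 1 = H s 0) :
    wnd (H 1) = wnd (H 0) := by
  have hK : IsCompact (Icc (0:ℝ) 1 ×ˢ Icc (0:ℝ) 1) := isCompact_Icc.prod isCompact_Icc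
  have hKne : (Icc (0:ℝ) 1 ×ˢ Icc (0:ℝ) 1).Nonempty :=
    ⟨(0,0), by constructor <;> norm_num⟩
  obtain ⟨p₀, hp₀, hmin⟩ := hK.exists_isMinOn hKne hH.norm
  set m : ℝ := ‖H p₀.1 p₀.2‖ with hm
  have hmpos : 0 < m := norm_pos_iff.mpr (hne _ hp₀.1 _ hp₀.2)
  have hmin' : ∀ q : ℝ × ℝ, q ∈ Icc (0:ℝ) 1 ×ˢ Icc (0:ℝ) 1 → m ≤ ‖H q.1 q.2‖ :=
    fun q hq => hmin hq
  have huc := hK.uniformContinuousOn_of_continuous hH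
  rw [Metric.uniformContinuousOn_iff] at huc
  obtain ⟨ε, hεpos, hε⟩ := huc m hmpos
  have hslice : ∀ s ∈ Icc (0:ℝ) 1, ContinuousOn (H s) (Icc 0 1) := by
    intro s hs
    apply hH.comp ((continuous_const.prodMk continuous_id).continuousOn)
    intro t ht
    exact ⟨hs, ht⟩
  have hstep : ∀ s ∈ Icc (0:ℝ) 1, ∀ s' ∈ Icc (0:ℝ) 1, dist s' s < ε →
      wnd (H s') = wnd (H s) := by
    intro s hs s' hs' hd
    obtain ⟨M, hM⟩ := exists_lift (hslice s hs) (hne s hs)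
    apply wnd_close hM (hslice s' hs')
    · intro t ht
      have h1 : dist ((s', t) : ℝ × ℝ) (s, t) < ε := by
        rw [Prod.dist_eq]
        simp only [dist_self]
        rw [max_eq_left dist_nonneg]
        exact hd
      have h2 := hε (s', t) ⟨hs', ht⟩ (s, t) ⟨hs, ht⟩ h1
      rw [dist_eq_norm] at h2
      exact h2.trans_le (hmin' (s, t) ⟨hs, ht⟩)
    · exact hloop s' hs'
    · exact hloop s hs
  -- connectedness via sSup
  set A : Set ℝ := {s | s ∈ Icc (0:ℝ) 1 ∧ wnd (H s) = wnd (H 0)} with hA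
  have h0A : (0:ℝ) ∈ A := ⟨by norm_num, rfl⟩
  have hbdd : BddAbove A := ⟨1, fun x hx => hx.1.2⟩
  set T : ℝ := sSup A with hT
  have hT0 : 0 ≤ T := le_csSup hbdd h0A
  have hT1 : T ≤ 1 := csSup_le ⟨0, h0A⟩ (fun x hx => hx.1.2)
  have hTI : T ∈ Icc (0:ℝ) 1 := ⟨hT0, hT1⟩
  have hTA : wnd (H T) = wnd (H 0) := by
    obtain ⟨s, hsA, hs⟩ := exists_lt_of_lt_csSup ⟨0, h0A⟩ (show T - ε < sSup A by rw [← hT]; linarith)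
    have hsT : s ≤ T := le_csSup hbdd hsA
    have : dist T s < ε := by
      rw [Real.dist_eq, _root_.abs_of_nonneg (by linarith)]
      linarith
    rw [hstep s hsA.1 T hTI this]
    exact hsA.2
  rcases eq_or_lt_of_le hT1 with hT1' | hT1'
  · rw [← hT1']
    exact hTA
  · exfalso
    set s' : ℝ := min 1 (T + ε / 2) with hs'
    have hs'I : s' ∈ Icc (0:ℝ) 1 := ⟨le_min (by norm_num) (by linarith), min_le_left _ _⟩
    have hs'T : T < s' := lt_min hT1' (by linarith)
    have hs'dist : dist s' T < ε := by
      rw [Real.dist_eq, _root_.abs_of_nonneg (by linarith)]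
      have : s' ≤ T + ε / 2 := min_le_right _ _
      linarith
    have hs'A : s' ∈ A := ⟨hs'I, by rw [hstep T hTI s' hs'I hs'dist]; exact hTA⟩
    exact absurd (le_csSup hbdd hs'A) (not_le.mpr hs'T)

/-- Borsuk: an odd loop has nonzero winding number. -/
lemma wnd_odd {γ : ℝ → ℂ} (hγ : ContinuousOn γ (Icc 0 1))
    (h0 : ∀ t ∈ Icc (0:ℝ) 1, γ t ≠ 0)
    (hodd : ∀ t ∈ Icc (0:ℝ) (1/2), γ (t + 1/2) = -γ t) : wnd γ ≠ 0 := by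
  obtain ⟨L, hL⟩ := exists_lift hγ h0
  set D : ℝ → ℂ := fun t => L (t + 1/2) - L t with hD
  have hmem : ∀ t ∈ Icc (0:ℝ) (1/2), t ∈ Icc (0:ℝ) 1 ∧ t + 1/2 ∈ Icc (0:ℝ) 1 := by
    intro t ht
    constructor
    · exact ⟨ht.1, by linarith [ht.2]⟩
    · exact ⟨by linarith [ht.1], by linarith [ht.2]⟩
  have hexp : ∀ t ∈ Icc (0:ℝ) (1/2), Complex.exp (D t) = -1 := by
    intro t ht
    rw [hD]
    dsimp only
    rw [Complex.exp_sub, hL.2 _ (hmem t ht).2, hL.2 _ (hmem t ht).1, hodd t ht]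
    rw [neg_div, div_self (h0 t (hmem t ht).1)]
  have hrep : ∀ t ∈ Icc (0:ℝ) (1/2), ∃ k : ℤ, D t = (2*k - 1) * Real.pi * I := by
    intro t ht
    have h1 : Complex.exp (D t + Real.pi * I) = 1 := by
      rw [Complex.exp_add, hexp t ht, Complex.exp_pi_mul_I]
      ring
    obtain ⟨k, hk⟩ := Complex.exp_eq_one_iff.mp h1
    refine ⟨k, ?_⟩
    have : D t = k * (2 * Real.pi * I) - Real.pi * I := by linear_combination hk
    rw [this]
    push_cast
    ring
  have hucont : ContinuousOn (fun t => (D t).im) (Icc 0 (1/2)) := by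
    apply Complex.continuous_im.comp_continuousOn
    apply ContinuousOn.sub
    · apply hL.1.comp (continuous_id.add continuous_const).continuousOn
      intro t ht
      exact (hmem t ht).2
    · exact hL.1.mono (fun t ht => (hmem t ht).1)
  have him : ∀ t ∈ Icc (0:ℝ) (1/2), ∃ k : ℤ, (D t).im = -Real.pi + k * (2 * Real.pi) := by
    intro t ht
    obtain ⟨k, hk⟩ := hrep t ht
    refine ⟨k, ?_⟩
    rw [hk]
    simp
    ring
  have h05 := int_values_const (by norm_num : (0:ℝ) ≤ 1/2) hucont
    (by positivity) him
  obtain ⟨k₀, hk₀⟩ := hrep 0 (by norm_num)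
  obtain ⟨k₁, hk₁⟩ := hrep (1/2) (by norm_num)
  have aux_im : ∀ k : ℤ, ((2*(k:ℂ) - 1) * (Real.pi:ℂ) * I).im = (2*(k:ℝ) - 1) * Real.pi := by
    intro k
    simp [Complex.mul_im, Complex.mul_re]
  have hkk : k₀ = k₁ := by
    rw [hk₀, hk₁, aux_im, aux_im] at h05
    have h6 : (2*(k₀:ℝ) - 1) = (2*(k₁:ℝ) - 1) := mul_right_cancel₀ Real.pi_ne_zero h05
    have h7 : (k₀:ℝ) = (k₁:ℝ) := by linarith
    exact_mod_cast h7
  have hsum : L 1 - L 0 = D (1/2) + D 0 := by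
    rw [hD]
    dsimp only
    norm_num
  rw [hkk] at hk₀
  rw [wnd_eq hL, hsum, hk₁, hk₀]
  intro hcontra
  have h8 : ((2 * (2*k₁ - 1) : ℤ) : ℂ) * (Real.pi:ℂ) * I = 0 := by
    push_cast
    linear_combination hcontra
  rcases mul_eq_zero.mp h8 with h9 | h9
  · rcases mul_eq_zero.mp h9 with h10 | h10
    · have : (2 * (2*k₁ - 1) : ℤ) = 0 := by exact_mod_cast h10
      omega
    · exact Complex.ofReal_ne_zero.mpr Real.pi_ne_zero h10
  · exact Complex.I_ne_zero h9

/-- the unit circle loop -/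
def cir (t : ℝ) : ℂ := Complex.exp (((2 * Real.pi * t : ℝ) : ℂ) * I)

lemma cir_cont : Continuous cir :=
  Complex.continuous_exp.comp ((Complex.continuous_ofReal.comp
    (continuous_const.mul continuous_id)).mul continuous_const)

lemma cir_norm (t : ℝ) : ‖cir t‖ = 1 := by
  rw [cir, Complex.norm_exp_ofReal_mul_I]

lemma cir_ne (t : ℝ) : cir t ≠ 0 := Complex.exp_ne_zero _

lemma cir_mem (t : ℝ) : cir t ∈ Metric.closedBall (0:ℂ) 1 := by
  rw [Metric.mem_closedBall, dist_zero_right, cir_norm]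

lemma cir_sphere (t : ℝ) : cir t ∈ Metric.sphere (0:ℂ) 1 := by
  rw [mem_sphere_zero_iff_norm, cir_norm]

lemma cir_half (t : ℝ) : cir (t + 1/2) = -cir t := by
  rw [cir, cir]
  have h1 : ((2 * Real.pi * (t + 1/2) : ℝ) : ℂ) * I
      = ((2 * Real.pi * t : ℝ) : ℂ) * I + (Real.pi : ℂ) * I := by
    push_cast
    ring
  rw [h1, Complex.exp_add, Complex.exp_pi_mul_I]
  ring

lemma cir_loop : cir 1 = cir 0 := by
  rw [cir, cir]
  push_cast
  rw [mul_one, Complex.exp_two_pi_mul_I]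
  norm_num

lemma smul_cir_mem {s t : ℝ} (hs : s ∈ Icc (0:ℝ) 1) :
    -((s:ℂ)) * cir t ∈ Metric.closedBall (0:ℂ) 1 := by
  rw [Metric.mem_closedBall, dist_zero_right, norm_mul, norm_neg, cir_norm, mul_one,
    Complex.norm_real, Real.norm_eq_abs, _root_.abs_of_nonneg hs.1]
  exact hs.2

lemma smul_cir_mem' {s t : ℝ} (hs : s ∈ Icc (0:ℝ) 1) :
    ((s:ℂ)) * cir t ∈ Metric.closedBall (0:ℂ) 1 := by
  rw [Metric.mem_closedBall, dist_zero_right, norm_mul, cir_norm, mul_one,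
    Complex.norm_real, Real.norm_eq_abs, _root_.abs_of_nonneg hs.1]
  exact hs.2

/-- Invariance of domain on the closed unit disk. -/
theorem iod {f : ℂ → ℂ} (hf : ContinuousOn f (Metric.closedBall 0 1))
    (hinj : Set.InjOn f (Metric.closedBall 0 1)) :
    f 0 ∈ interior (f '' Metric.closedBall 0 1) := by
  have hball : (0:ℂ) ∈ Metric.closedBall (0:ℂ) 1 := by
    simp
  -- Step A: winding of the boundary loop about f 0 is nonzero
  set γp : ℝ → ℂ := fun t => f (cir t) - f 0 with hγp
  have hγpt : ∀ t, γp t = f (cir t) - f 0 := fun _ => rfl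
  have hγpcont : ContinuousOn γp (Icc 0 1) := by
    apply ContinuousOn.sub ?_ continuousOn_const
    exact hf.comp (cir_cont.continuousOn) (fun t _ => cir_mem t)
  have hwfp : wnd γp ≠ 0 := by
    set H : ℝ → ℝ → ℂ := fun s t => f (cir t) - f (-((s:ℂ)) * cir t) with hH
    have hHt : ∀ s t, H s t = f (cir t) - f (-((s:ℂ)) * cir t) := fun _ _ => rfl
    have hHcont : ContinuousOn (fun p : ℝ × ℝ => H p.1 p.2) (Icc 0 1 ×ˢ Icc 0 1) := by
      rw [hH]
      apply ContinuousOn.sub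
      · exact hf.comp (cir_cont.comp continuous_snd).continuousOn
          (fun p _ => cir_mem p.2)
      · apply hf.comp
        · apply Continuous.continuousOn
          exact ((Complex.continuous_ofReal.comp continuous_fst).neg).mul
            (cir_cont.comp continuous_snd)
        · exact fun p hp => smul_cir_mem hp.1
    have hHne : ∀ s ∈ Icc (0:ℝ) 1, ∀ t ∈ Icc (0:ℝ) 1, H s t ≠ 0 := by
      intro s hs t _ h0
      rw [hHt, sub_eq_zero] at h0
      have h1 := hinj (cir_mem t) (smul_cir_mem hs) h0
      have h2 : (1 + (s:ℂ)) * cir t = 0 := by linear_combination h1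
      rcases mul_eq_zero.mp h2 with h3 | h3
      · have h4 : (1 + s : ℝ) = 0 := by exact_mod_cast h3
        linarith [hs.1]
      · exact cir_ne t h3
    have hHloop : ∀ s ∈ Icc (0:ℝ) 1, H s 1 = H s 0 := by
      intro s _
      rw [hHt, hHt, cir_loop]
    have hhom := wnd_homotopy hHcont hHne hHloop
    have hodd : wnd (H 1) ≠ 0 := by
      apply wnd_odd
      · apply (hHcont.comp (f := fun t : ℝ => ((1:ℝ), t)) ?_ ?_)
        · exact (continuous_const.prodMk continuous_id).continuousOn
        · exact fun t ht => ⟨by norm_num, ht⟩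
      · exact fun t ht => hHne 1 (by norm_num) t ht
      · intro t ht
        rw [hHt, hHt, cir_half t]
        rw [show -((1:ℝ):ℂ) * -cir t = cir t by push_cast; ring]
        rw [show -((1:ℝ):ℂ) * cir t = -cir t by push_cast; ring]
        ring
    have hH0 : H 0 = γp := by
      funext t
      rw [hHt, hγpt]
      norm_num
    rw [hhom, hH0] at hodd
    exact hodd
  -- Step B: distance from f 0 to the boundary image
  set Γ : Set ℂ := f '' Metric.sphere 0 1 with hΓ
  have hΓcomp : IsCompact Γ :=
    (isCompact_sphere 0 1).image_of_continuousOn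
      (hf.mono Metric.sphere_subset_closedBall)
  have hΓne : Γ.Nonempty := ⟨f 1, 1, by simp, rfl⟩
  have hp_not : f 0 ∉ Γ := by
    rintro ⟨x, hx, hfx⟩
    have := hinj (Metric.sphere_subset_closedBall hx) hball hfx
    rw [this] at hx
    simp at hx
  set d : ℝ := Metric.infDist (f 0) Γ with hd
  have hdpos : 0 < d :=
    (hΓcomp.isClosed.notMem_iff_infDist_pos hΓne).mp hp_not
  have hdle : ∀ t, d ≤ ‖f (cir t) - f 0‖ := by
    intro t
    have h1 : f (cir t) ∈ Γ := ⟨cir t, cir_sphere t, rfl⟩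
    calc d ≤ dist (f 0) (f (cir t)) := Metric.infDist_le_dist_of_mem h1
    _ = ‖f (cir t) - f 0‖ := by rw [dist_eq_norm, norm_sub_rev]
  -- Step C: the ball of radius d is covered
  have hcover : Metric.ball (f 0) d ⊆ f '' Metric.closedBall 0 1 := by
    intro q hq
    by_contra hq'
    have hqne : ∀ w ∈ Metric.closedBall (0:ℂ) 1, f w ≠ q := by
      intro w hw h
      exact hq' ⟨w, hw, h⟩
    set H' : ℝ → ℝ → ℂ := fun s t => f ((s:ℂ) * cir t) - q with hH'
    have hH't : ∀ s t, H' s t = f ((s:ℂ) * cir t) - q := fun _ _ => rfl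
    have hH'cont : ContinuousOn (fun p : ℝ × ℝ => H' p.1 p.2) (Icc 0 1 ×ˢ Icc 0 1) := by
      rw [hH']
      apply ContinuousOn.sub ?_ continuousOn_const
      apply hf.comp
      · apply Continuous.continuousOn
        exact (Complex.continuous_ofReal.comp continuous_fst).mul
          (cir_cont.comp continuous_snd)
      · exact fun p hp => smul_cir_mem' hp.1
    have hH'ne : ∀ s ∈ Icc (0:ℝ) 1, ∀ t ∈ Icc (0:ℝ) 1, H' s t ≠ 0 := by
      intro s hs t _ h0
      rw [hH't, sub_eq_zero] at h0
      exact hqne _ (smul_cir_mem' hs) h0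
    have hH'loop : ∀ s ∈ Icc (0:ℝ) 1, H' s 1 = H' s 0 := by
      intro s _
      rw [hH't, hH't, cir_loop]
    have hhom' := wnd_homotopy hH'cont hH'ne hH'loop
    have hzero : wnd (H' 0) = 0 := by
      apply wnd_const (c := f 0 - q)
      · rw [sub_ne_zero]
        intro h
        exact hq' ⟨0, hball, h⟩
      · intro t _
        rw [hH't]
        norm_num
    rw [hzero] at hhom'
    -- compare wnd (H' 1) with wnd γp
    obtain ⟨M, hM⟩ := exists_lift hγpcont
      (fun t _ => by
        rw [hγpt]
        intro h0
        have h5 := hdle t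
        rw [h0] at h5
        simp only [norm_zero] at h5
        linarith)
    have hclose : wnd (H' 1) = wnd γp := by
      apply wnd_close hM
      · apply (hH'cont.comp (f := fun t : ℝ => ((1:ℝ), t)) ?_ ?_)
        · exact (continuous_const.prodMk continuous_id).continuousOn
        · exact fun t ht => ⟨by norm_num, ht⟩
      · intro t ht
        rw [hH't, hγpt]
        push_cast
        rw [one_mul]
        have h1 : f (cir t) - q - (f (cir t) - f 0) = f 0 - q := by ring
        rw [h1]
        have h2 : ‖f 0 - q‖ = dist q (f 0) := by
          rw [dist_comm, dist_eq_norm]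
        rw [h2]
        exact (Metric.mem_ball.mp hq).trans_le (hdle t)
      · rw [hH't, hH't, cir_loop]
      · rw [hγpt, hγpt, cir_loop]
    rw [hhom'] at hclose
    exact hwfp hclose.symm
  exact mem_interior.mpr ⟨Metric.ball (f 0) d, hcover, Metric.isOpen_ball,
    Metric.mem_ball_self hdpos⟩

/-- A continuous injective map `ℂ → ℂ` is open. -/
theorem isOpenMap_of_inj_c {g : ℂ → ℂ} (hc : Continuous g) (hi : Function.Injective g) :
    IsOpenMap g := by
  intro O hO
  rw [isOpen_iff_mem_nhds]
  rintro _ ⟨c, hcO, rfl⟩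
  rw [← mem_interior_iff_mem_nhds]
  obtain ⟨ε, hε, hball⟩ := Metric.isOpen_iff.mp hO c hcO
  set f : ℂ → ℂ := fun z => g (c + ((ε/2 : ℝ) : ℂ) * z) with hf
  have hfc : ContinuousOn f (Metric.closedBall 0 1) :=
    (hc.comp (continuous_const.add (continuous_const.mul continuous_id))).continuousOn
  have hfinj : Set.InjOn f (Metric.closedBall 0 1) := by
    intro a _ b _ h
    have h1 := hi h
    have h2 : ((ε/2 : ℝ) : ℂ) * a = ((ε/2 : ℝ) : ℂ) * b := by
      have := add_left_cancel h1
      exact this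
    have h3 : ((ε/2 : ℝ) : ℂ) ≠ 0 := by
      simp only [ne_eq, Complex.ofReal_eq_zero]
      positivity
    exact mul_left_cancel₀ h3 h2
  have h0 : f 0 = g c := by rw [hf]; simp
  have himg : f '' Metric.closedBall 0 1 ⊆ g '' O := by
    rintro _ ⟨z, hz, rfl⟩
    refine ⟨c + ((ε/2 : ℝ) : ℂ) * z, hball ?_, rfl⟩
    rw [Metric.mem_ball, dist_comm, dist_eq_norm]
    have h4 : ‖c - (c + ((ε/2 : ℝ) : ℂ) * z)‖ = (ε/2) * ‖z‖ := by
      rw [show c - (c + ((ε/2 : ℝ) : ℂ) * z) = -(((ε/2 : ℝ) : ℂ) * z) by ring]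
      rw [norm_neg, norm_mul, Complex.norm_real, Real.norm_eq_abs,
        _root_.abs_of_nonneg (by positivity)]
    rw [h4]
    have h5 : ‖z‖ ≤ 1 := by
      rw [← dist_zero_right]
      exact Metric.mem_closedBall.mp (by simpa [dist_comm] using hz)
    nlinarith
  have := interior_mono himg (iod hfc hfinj)
  rw [h0] at this
  exact this

/-- identification of ℂ and ℝ × ℝ -/
def cH : ℂ ≃ₜ ℝ × ℝ := equivRealProdCLM.toHomeomorph

/-- A continuous injective map of the plane is an open embedding. -/
theorem isOpenEmbedding_plane {g : ℝ × ℝ → ℝ × ℝ} (hc : Continuous g)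
    (hi : Function.Injective g) : IsOpenEmbedding g := by
  apply IsOpenEmbedding.of_continuous_injective_isOpenMap hc hi
  set g' : ℂ → ℂ := fun z => cH.symm (g (cH z)) with hg'
  have hg'c : Continuous g' := cH.symm.continuous.comp (hc.comp cH.continuous)
  have hg'i : Function.Injective g' :=
    fun a b h => cH.injective (hi (cH.symm.injective h))
  have hmap : IsOpenMap g' := isOpenMap_of_inj_c hg'c hg'i
  have hgeq : g = fun v => cH (g' (cH.symm v)) := by
    funext v
    rw [hg']
    simp
  rw [hgeq]
  exact (cH.isOpenMap.comp hmap).comp cH.symm.isOpenMap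

theorem invFun_continuousOn {g : ℝ × ℝ → ℝ × ℝ} (hi : Function.Injective g)
    (hom : IsOpenMap g) : ContinuousOn (Function.invFun g) (Set.range g) := by
  rintro _ ⟨v, rfl⟩
  rw [ContinuousWithinAt, Function.leftInverse_invFun hi v]
  intro A hA
  rw [Filter.mem_map]
  obtain ⟨Uo, hUoA, hUoopen, hvU⟩ := mem_nhds_iff.mp hA
  have h1 : g '' Uo ∈ nhdsWithin (g v) (Set.range g) :=
    mem_nhdsWithin_of_mem_nhds ((hom Uo hUoopen).mem_nhds ⟨v, hvU, rfl⟩)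
  apply Filter.mem_of_superset h1
  rintro _ ⟨a, ha, rfl⟩
  show Function.invFun g (g a) ∈ A
  rw [Function.leftInverse_invFun hi a]
  exact hUoA ha

end Wind

open Topology

lemma proj_continuous : Continuous proj := by
  apply Continuous.prodMk
  · exact continuous_snd.fst
  · exact continuous_snd.snd.add ((continuous_fst.mul continuous_snd.fst).div_const 2)

lemma proj_injOn {α : ℝ} (hα : 0 < α) {S : Set H} (hflat : FlatConeProp α S) :
    ∀ p ∈ S, ∀ q ∈ S, proj p = proj q → p = q := by
  intro p hp q hq hpq
  by_contra hne
  have h1 : p.2.1 = q.2.1 := by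
    have h := congrArg (fun w : ℝ × ℝ => w.1) hpq
    exact h
  have h2 : p.2.2 + p.1 * p.2.1 / 2 = q.2.2 + q.1 * q.2.1 / 2 := by
    have h := congrArg (fun w : ℝ × ℝ => w.2) hpq
    exact h
  have hx : p.1 ≠ q.1 := by
    intro hx
    apply hne
    have h3 : p.2.2 = q.2.2 := by
      rw [hx, h1] at h2
      linarith
    exact Prod.ext hx (Prod.ext h1 h3)
  have hmem : Hmul (Hinv p) q ∈ fC α ∩ LTrans (Hinv p) S := by
    constructor
    · constructor
      · show |(-p.2.1) + q.2.1| < α * |(-p.1) + q.1|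
        rw [h1]
        simp only [neg_add_cancel, abs_zero]
        have : (0:ℝ) < |(-p.1) + q.1| := by
          rw [abs_pos]
          intro h
          exact hx (by linarith)
        positivity
      · show (-p.2.2) + q.2.2 + ((-p.1) * q.2.1 - q.1 * (-p.2.1)) / 2 = 0
        rw [← h1] at h2 ⊢
        linarith
    · exact ⟨q, hq, rfl⟩
  rw [hflat p hp] at hmem
  exact hmem

theorem stmt4 (α : ℝ) (hα : 0 < α) (S : Set H) (hS : IsTopSurface S)
    (hflat : FlatConeProp α S) :
    IsOpen (proj '' S) ∧ ∃ φ : ℝ × ℝ → ℝ, ContinuousOn φ (proj '' S) ∧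
      S = IGraph (proj '' S) φ := by
  classical
  have hinjS := proj_injOn hα hflat
  -- the height function
  set φ : ℝ × ℝ → ℝ := fun w =>
    if h : ∃ p, p ∈ S ∧ proj p = w then h.choose.1 else 0 with hφdef
  have hφ : ∀ p ∈ S, φ (proj p) = p.1 := by
    intro p hp
    have hex : ∃ q, q ∈ S ∧ proj q = proj p := ⟨p, hp, rfl⟩
    have h1 : φ (proj p) = hex.choose.1 := by
      rw [hφdef]
      exact dif_pos hex
    rw [h1]
    obtain ⟨hS', hproj'⟩ := hex.choose_spec
    rw [hinjS _ hS' _ hp hproj']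
  -- graph representation of points
  have hgraph : ∀ p ∈ S, (fun w => (φ w, w.1, w.2 - w.1 * φ w / 2)) (proj p) = p := by
    intro p hp
    dsimp only
    rw [hφ p hp]
    show (p.1, p.2.1, p.2.2 + p.1 * p.2.1 / 2 - p.2.1 * p.1 / 2) = p
    refine Prod.ext rfl (Prod.ext rfl ?_)
    ring
  -- local chart data
  have hlocal : ∀ p ∈ S, ∃ O : Set (ℝ × ℝ), IsOpen O ∧ proj p ∈ O ∧ O ⊆ proj '' S ∧
      ContinuousOn φ O := by
    intro p hp
    obtain ⟨U, hUopen, hpU, ⟨e⟩⟩ := hS ⟨p, hp⟩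
    set ψ : ℝ × ℝ → H := fun v => ((e.symm v : S) : H) with hψdef
    have hψcont : Continuous ψ :=
      continuous_subtype_val.comp (continuous_subtype_val.comp e.symm.continuous)
    have hψinj : Function.Injective ψ := by
      intro a b hab
      apply e.symm.injective
      exact Subtype.val_injective (Subtype.val_injective hab)
    have hψS : ∀ v, ψ v ∈ S := fun v => (e.symm v : S).2
    set g : ℝ × ℝ → ℝ × ℝ := fun v => proj (ψ v) with hgdef
    have hgc : Continuous g := proj_continuous.comp hψcont
    have hgi : Function.Injective g := by
      intro a b hab
      exact hψinj (hinjS _ (hψS a) _ (hψS b) hab)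
    have hOE := Wind.isOpenEmbedding_plane hgc hgi
    have hpmem : ∃ v, ψ v = p := by
      refine ⟨e ⟨⟨p, hp⟩, hpU⟩, ?_⟩
      rw [hψdef]
      simp
    obtain ⟨v₀, hv₀⟩ := hpmem
    refine ⟨Set.range g, hOE.isOpen_range, ⟨v₀, by rw [hgdef]; dsimp only; rw [hv₀]⟩, ?_, ?_⟩
    · rintro _ ⟨v, rfl⟩
      exact ⟨ψ v, hψS v, rfl⟩
    · -- continuity of φ on range g
      have hEq : Set.EqOn φ (fun w => (ψ (Function.invFun g w)).1) (Set.range g) := by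
        rintro _ ⟨v, rfl⟩
        dsimp only
        rw [Function.leftInverse_invFun hgi v]
        exact hφ (ψ v) (hψS v)
      have hinv := Wind.invFun_continuousOn hgi hOE.isOpenMap
      have hc2 : ContinuousOn (fun w => (ψ (Function.invFun g w)).1) (Set.range g) :=
        (continuous_fst.comp hψcont).comp_continuousOn hinv
      exact hc2.congr hEq
  constructor
  · rw [isOpen_iff_forall_mem_open]
    rintro _ ⟨p, hp, rfl⟩
    obtain ⟨O, hO1, hO2, hO3, _⟩ := hlocal p hp
    exact ⟨O, hO3, hO1, hO2⟩
  · refine ⟨φ, ?_, ?_⟩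
    · rintro _ ⟨p, hp, rfl⟩
      obtain ⟨O, hO1, hO2, hO3, hO4⟩ := hlocal p hp
      exact ((hO4.continuousAt (hO1.mem_nhds hO2)).continuousWithinAt)
    · ext r
      constructor
      · intro hr
        exact ⟨proj r, ⟨r, hr, rfl⟩, hgraph r hr⟩
      · rintro ⟨w, ⟨p, hp, rfl⟩, rfl⟩
        rw [hgraph p hp]
        exact hp
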